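/- Let k ≥ 2 be an integer, c, η > 0, and let I be a real interval of length |I|. Let A ⊆ I be a finite set with #A ≥ c|I| whose points are pairwise at distance at least η. Set r = k/(k−1), j = ⌈log(2/(cη))/log r⌉, and Z₀ = 2ηk^j. If |I| ≥ Z₀, then there exists x ≥ 2η and a subinterval J ⊆ I of length kx such that when J is divided into k consecutive equal subintervals J₁,…,J_k, each J_i contains a point of A. -/

import Mathlib

open Set Real

lemma sep_ncard_aux {η u v : ℝ} (hη : 0 < η) (huv : u ≤ v) (S : Set ℝ) (hS : S.Finite)
    (hsub : S ⊆ Set.Icc u v)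
    (hsep : ∀ p ∈ S, ∀ q ∈ S, p ≠ q → η ≤ |p - q|) :
    (S.ncard : ℝ) ≤ (v - u) / η + 1 := by
  set f : ℝ → ℤ := fun p => ⌊(p - u) / η⌋ with hf
  have hinj : Set.InjOn f S := by
    intro p hp q hq hpq
    by_contra hne
    have h1 := hsep p hp q hq hne
    have hfp : (p - u)/η < f p + 1 := Int.lt_floor_add_one _
    have hfp' : (f p : ℝ) ≤ (p - u)/η := Int.floor_le _
    have hfq : (q - u)/η < f q + 1 := Int.lt_floor_add_one _
    have hfq' : (f q : ℝ) ≤ (q - u)/η := Int.floor_le _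
    rw [hpq] at hfp hfp'
    have habs : |(p - u)/η - (q - u)/η| < 1 := by
      rw [abs_lt]; constructor <;> linarith
    have heq : (p-u)/η - (q-u)/η = (p - q)/η := by ring
    rw [heq, abs_div, abs_of_pos hη] at habs
    have := (div_lt_one hη).mp habs
    linarith
  have himg : f '' S ⊆ Set.Icc (0 : ℤ) ⌊(v - u)/η⌋ := by
    rintro _ ⟨p, hp, rfl⟩
    obtain ⟨hp1, hp2⟩ := hsub hp
    constructor
    · exact Int.floor_nonneg.mpr (div_nonneg (by linarith) hη.le)
    · exact Int.floor_le_floor (by gcongr)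
  have hcount : S.ncard = (f '' S).ncard := (Set.ncard_image_of_injOn hinj).symm
  have h2 : (f '' S).ncard ≤ (Set.Icc (0:ℤ) ⌊(v-u)/η⌋).ncard :=
    Set.ncard_le_ncard himg (Set.finite_Icc _ _)
  have h3 : (Set.Icc (0:ℤ) ⌊(v-u)/η⌋).ncard = (⌊(v-u)/η⌋ + 1).toNat := by
    rw [← Finset.coe_Icc, Set.ncard_coe_finset, Int.card_Icc]
    norm_num
  have hfl0 : (0:ℤ) ≤ ⌊(v-u)/η⌋ := Int.floor_nonneg.mpr (div_nonneg (by linarith) hη.le)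
  have h4 : ((⌊(v-u)/η⌋ + 1).toNat : ℝ) = (⌊(v-u)/η⌋ : ℝ) + 1 := by
    have h := Int.toNat_of_nonneg (show (0:ℤ) ≤ ⌊(v-u)/η⌋ + 1 by omega)
    exact_mod_cast congrArg (fun z : ℤ => (z:ℝ)) h
  have h5 : (S.ncard : ℝ) ≤ ((⌊(v-u)/η⌋ + 1).toNat : ℝ) := by
    rw [hcount, ← h3]; exact_mod_cast h2
  rw [h4] at h5
  have h6 : ((⌊(v-u)/η⌋ : ℝ)) ≤ (v - u)/η := Int.floor_le _
  linarith

set_option maxHeartbeats 1000000 in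
theorem stmt18 (k : ℕ) (hk : 2 ≤ k) (c η : ℝ) (hc : 0 < c) (hη : 0 < η)
    (a b : ℝ) (hab : a ≤ b) (A : Set ℝ) (hA : A ⊆ Set.Icc a b) (hAfin : A.Finite)
    (hcard : c * (b - a) ≤ (A.ncard : ℝ))
    (hsepA : ∀ p ∈ A, ∀ q ∈ A, p ≠ q → η ≤ |p - q|)
    (hlen : 2 * η * (k : ℝ) ^
        (⌈Real.log (2 / (c * η)) / Real.log ((k : ℝ) / ((k : ℝ) - 1))⌉₊) ≤ b - a) :
    ∃ x : ℝ, 2 * η ≤ x ∧ ∃ u : ℝ,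
      Set.Icc u (u + (k : ℝ) * x) ⊆ Set.Icc a b ∧
      ∀ i : ℕ, i < k → ∃ p ∈ A, p ∈ Set.Icc (u + (i : ℝ) * x) (u + ((i : ℝ) + 1) * x) := by
  by_contra hcon
  push_neg at hcon
  set r : ℝ := (k:ℝ)/((k:ℝ)-1) with hr
  set j : ℕ := ⌈Real.log (2 / (c * η)) / Real.log ((k : ℝ) / ((k : ℝ) - 1))⌉₊ with hj
  have hk2 : (2:ℝ) ≤ (k:ℝ) := by exact_mod_cast hk
  have hk1 : (0:ℝ) < (k:ℝ) - 1 := by linarith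
  have hkpos : (0:ℝ) < (k:ℝ) := by linarith
  have hr1 : 1 < r := by rw [hr, lt_div_iff₀ hk1]; linarith
  have hrpos : 0 < r := by linarith
  have key : ∀ s : ℕ, s ≤ j → ∃ u v : ℝ,
      Set.Icc u v ⊆ Set.Icc a b ∧ 2*η*(k:ℝ)^(j - s) ≤ v - u ∧
      c * r^s * (v - u) ≤ ((A ∩ Set.Icc u v).ncard : ℝ) := by
    intro s
    induction s with
    | zero =>
      intro _
      refine ⟨a, b, subset_rfl, by simpa using hlen, ?_⟩
      rw [Set.inter_eq_self_of_subset_left hA]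
      simpa using hcard
    | succ s ih =>
      intro hs
      obtain ⟨u, v, hsub, hlenv, hden⟩ := ih (Nat.le_of_succ_le hs)
      have hpow : (k:ℝ)^(j - s) = (k:ℝ) * (k:ℝ)^(j - (s+1)) := by
        have hjs : j - s = (j - (s+1)) + 1 := by omega
        rw [hjs, pow_succ]; ring
      have hone : (1:ℝ) ≤ (k:ℝ)^(j-(s+1)) := one_le_pow₀ (by linarith)
      set x : ℝ := (v - u)/k with hx
      have hvu : v - u = (k:ℝ) * x := by rw [hx]; field_simp
      have h2k : 2*η*(k:ℝ) ≤ v - u := by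
        have h0 : (0:ℝ) ≤ 2*η*(k:ℝ) := by positivity
        have hmul := mul_le_mul_of_nonneg_left hone h0
        rw [mul_one] at hmul
        calc 2*η*(k:ℝ) ≤ 2*η*(k:ℝ) * (k:ℝ)^(j-(s+1)) := hmul
          _ = 2*η*(k:ℝ)^(j-s) := by rw [hpow]; ring
          _ ≤ v - u := hlenv
      have hx2 : 2*η ≤ x := by rw [hx, le_div_iff₀ hkpos]; linarith
      have hxpos : 0 < x := by linarith
      have hxk : u + (k:ℝ) * x = v := by rw [← hvu]; ring
      obtain ⟨i, hik, hempty⟩ := hcon x hx2 u (by rw [hxk]; exact hsub)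
      have hfinB : (A ∩ Set.Icc u v).Finite := hAfin.inter_of_left _
      have hfin1 : (A ∩ Set.Icc u (u + (i:ℝ)*x)).Finite := hAfin.inter_of_left _
      have hfin2 : (A ∩ Set.Icc (u + ((i:ℝ)+1)*x) v).Finite := hAfin.inter_of_left _
      set n : ℝ := ((A ∩ Set.Icc u v).ncard : ℝ) with hn
      set n₁ : ℝ := ((A ∩ Set.Icc u (u + (i:ℝ)*x)).ncard : ℝ) with hn1
      set n₂ : ℝ := ((A ∩ Set.Icc (u + ((i:ℝ)+1)*x) v).ncard : ℝ) with hn2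
      have hsubB : (A ∩ Set.Icc u v) ⊆
          (A ∩ Set.Icc u (u + (i:ℝ)*x)) ∪ (A ∩ Set.Icc (u + ((i:ℝ)+1)*x) v) := by
        rintro p ⟨hpA, hpu, hpv⟩
        rcases le_or_gt p (u + (i:ℝ)*x) with h | h
        · exact Or.inl ⟨hpA, hpu, h⟩
        · refine Or.inr ⟨hpA, ?_, hpv⟩
          by_contra hlt
          push_neg at hlt
          exact hempty p hpA ⟨h.le, hlt.le⟩
      have hsum : n ≤ n₁ + n₂ := by
        have h := (Set.ncard_le_ncard hsubB (hfin1.union hfin2)).trans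
          (Set.ncard_union_le _ _)
        rw [hn, hn1, hn2]
        exact_mod_cast h
      have hn0 : 0 ≤ n := Nat.cast_nonneg _
      have hn10 : 0 ≤ n₁ := Nat.cast_nonneg _
      have hn20 : 0 ≤ n₂ := Nat.cast_nonneg _
      have hmain : ∃ (u' v' : ℝ) (l : ℕ), 1 ≤ l ∧ v' = u' + (l:ℝ) * x ∧
          Set.Icc u' v' ⊆ Set.Icc u v ∧
          n * l ≤ ((k:ℝ) - 1) * ((A ∩ Set.Icc u' v').ncard : ℝ) := by
        rcases Nat.eq_zero_or_pos i with hi0 | hi1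
        · -- i = 0 : all of B is to the right of the empty part
          subst hi0
          have hcast : ((k - 1 : ℕ):ℝ) = (k:ℝ) - 1 := by
            rw [Nat.cast_sub (by omega)]; norm_num
          refine ⟨u + x, v, k - 1, by omega, ?_, ?_, ?_⟩
          · rw [hcast, ← hxk]; ring
          · intro p hp; exact ⟨by linarith [hp.1], hp.2⟩
          · have hBB2 : (A ∩ Set.Icc u v) ⊆ A ∩ Set.Icc (u + x) v := by
              rintro p ⟨hpA, hpu, hpv⟩
              refine ⟨hpA, ?_, hpv⟩
              by_contra hlt
              push_neg at hlt
              have := hempty p hpA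
              simp only [Nat.cast_zero, zero_mul, add_zero, zero_add, one_mul] at this
              exact this ⟨hpu, hlt.le⟩
            have hc2 : n ≤ ((A ∩ Set.Icc (u + x) v).ncard : ℝ) := by
              rw [hn]
              exact_mod_cast Set.ncard_le_ncard hBB2 (hAfin.inter_of_left _)
            rw [hcast]
            nlinarith [hc2, hn0, hk1]
        · by_cases hik1 : i = k - 1
          · -- i = k - 1 : all of B is to the left of the empty part
            have hcast : ((i : ℕ):ℝ) = (k:ℝ) - 1 := by
              rw [hik1, Nat.cast_sub (by omega)]; norm_num
            refine ⟨u, u + (i:ℝ)*x, i, hi1, rfl, ?_, ?_⟩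
            · intro p hp
              refine ⟨hp.1, le_trans hp.2 ?_⟩
              rw [← hxk]
              have : (i:ℝ) ≤ (k:ℝ) := by exact_mod_cast hik.le
              nlinarith
            · have hBB1 : (A ∩ Set.Icc u v) ⊆ A ∩ Set.Icc u (u + (i:ℝ)*x) := by
                rintro p ⟨hpA, hpu, hpv⟩
                refine ⟨hpA, hpu, ?_⟩
                by_contra hlt
                push_neg at hlt
                have := hempty p hpA
                have hpv' : p ≤ u + ((i:ℝ)+1)*x := by
                  rw [hcast]; rw [← hxk] at hpv; linarith
                exact this ⟨hlt.le, hpv'⟩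
              have hc1 : n ≤ n₁ := by
                rw [hn, hn1]
                exact_mod_cast Set.ncard_le_ncard hBB1 hfin1
              rw [← hn1]
              have hgoal : n * (i:ℝ) ≤ ((k:ℝ)-1) * n₁ := by
                rw [hcast]
                nlinarith [hc1, hn0, hk1]
              exact hgoal
          · -- 0 < i < k - 1
            have hiklt : (i:ℝ) < (k:ℝ) - 1 := by
              have : i < k - 1 := by omega
              have := (Nat.cast_lt (α := ℝ)).mpr this
              rw [Nat.cast_sub (by omega)] at this
              simpa using this
            by_cases hside : (i:ℝ) * n ≤ ((k:ℝ)-1) * n₁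
            · refine ⟨u, u + (i:ℝ)*x, i, hi1, rfl, ?_, ?_⟩
              · intro p hp
                refine ⟨hp.1, le_trans hp.2 ?_⟩
                rw [← hxk]
                nlinarith
              · rw [← hn1]; linarith [hside]
            · push_neg at hside
              have hcast : ((k - 1 - i : ℕ):ℝ) = (k:ℝ) - 1 - (i:ℝ) := by
                rw [Nat.cast_sub (by omega), Nat.cast_sub (by omega)]
                norm_num
              refine ⟨u + ((i:ℝ)+1)*x, v, k - 1 - i, by omega, ?_, ?_, ?_⟩
              · rw [hcast, ← hxk]; ring
              · intro p hp
                refine ⟨?_, hp.2⟩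
                have := hp.1
                nlinarith [hxpos]
              · rw [hcast, ← hn2]
                nlinarith [hsum, hside, hn10]
      obtain ⟨u', v', l, hl1, hv', hsub', hcount'⟩ := hmain
      refine ⟨u', v', hsub'.trans hsub, ?_, ?_⟩
      · rw [hv']
        have hxlb : 2*η*(k:ℝ)^(j-(s+1)) ≤ x := by
          rw [hx, le_div_iff₀ hkpos]
          calc 2*η*(k:ℝ)^(j-(s+1)) * k = 2*η*(k:ℝ)^(j-s) := by rw [hpow]; ring
            _ ≤ v - u := hlenv
        have hl1' : (1:ℝ) ≤ (l:ℝ) := by exact_mod_cast hl1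
        have hxl : x ≤ (l:ℝ) * x := by nlinarith
        have heq : u' + (l:ℝ)*x - u' = (l:ℝ)*x := by ring
        rw [heq]
        linarith
      · have hgeq : v' - u' = (l:ℝ)*x := by rw [hv']; ring
        rw [pow_succ, hgeq]
        have h1 : c * r^s * ((k:ℝ)*x) ≤ n := by rw [← hvu]; exact hden
        have hl0 : (0:ℝ) ≤ (l:ℝ) := Nat.cast_nonneg l
        have hkey : (c * (r^s * r) * ((l:ℝ)*x)) * ((k:ℝ)-1) = (c * r^s * ((k:ℝ)*x)) * l := by
          rw [hr]; field_simp
        have h3 : (c * (r^s * r) * ((l:ℝ)*x)) * ((k:ℝ)-1)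
            ≤ ((k:ℝ)-1) * ((A ∩ Set.Icc u' v').ncard : ℝ) := by
          rw [hkey]
          exact le_trans (mul_le_mul_of_nonneg_right h1 hl0) hcount'
        have h3' : ((k:ℝ)-1) * (c * (r^s * r) * ((l:ℝ)*x))
            ≤ ((k:ℝ)-1) * (((A ∩ Set.Icc u' v').ncard : ℝ)) := by linarith [h3]
        exact le_of_mul_le_mul_left h3' hk1
  -- conclusion
  obtain ⟨u, v, hsub, hlenv, hden⟩ := key j le_rfl
  simp only [Nat.sub_self, pow_zero, mul_one] at hlenv
  have huv : u ≤ v := by linarith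
  have hrj : 2/(c*η) ≤ r^j := by
    by_cases hle : Real.log (2/(c*η)) ≤ 0
    · have hpos : (0:ℝ) < 2/(c*η) := by positivity
      have h1 : 2/(c*η) ≤ 1 := by
        by_contra hgt
        push_neg at hgt
        have := Real.log_pos hgt
        linarith
      exact le_trans h1 (one_le_pow₀ hr1.le)
    · push_neg at hle
      have hlogr : 0 < Real.log r := Real.log_pos hr1
      have ht : Real.log (2/(c*η)) / Real.log r ≤ (j:ℝ) := by
        rw [hj, hr]
        exact Nat.le_ceil _
      have hpos : (0:ℝ) < 2/(c*η) := by positivity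
      calc 2/(c*η) = Real.exp (Real.log (2/(c*η))) := (Real.exp_log hpos).symm
        _ = Real.exp ((Real.log (2/(c*η)) / Real.log r) * Real.log r) := by
            rw [div_mul_cancel₀ _ hlogr.ne']
        _ ≤ Real.exp ((j:ℝ) * Real.log r) :=
            Real.exp_le_exp.mpr (mul_le_mul_of_nonneg_right ht hlogr.le)
        _ = r ^ (j:ℕ) := by
            rw [mul_comm, ← Real.rpow_def_of_pos hrpos, Real.rpow_natCast]
  have hcr : 2/η ≤ c * r^j := by
    rw [div_le_iff₀ hη]
    rw [div_le_iff₀ (by positivity : (0:ℝ) < c*η)] at hrj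
    nlinarith
  have hsep' : ∀ p ∈ A ∩ Set.Icc u v, ∀ q ∈ A ∩ Set.Icc u v, p ≠ q → η ≤ |p - q| :=
    fun p hp q hq => hsepA p hp.1 q hq.1
  have hN := sep_ncard_aux hη huv (A ∩ Set.Icc u v) (hAfin.inter_of_left _)
    Set.inter_subset_right hsep'
  have hvu0 : (0:ℝ) ≤ v - u := by linarith
  have h1 : 2/η * (v - u) ≤ c * r^j * (v - u) := mul_le_mul_of_nonneg_right hcr hvu0
  have h2 : 2/η * (v - u) ≤ (v - u)/η + 1 := le_trans h1 (le_trans hden hN)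
  have h3 : (v - u) ≤ η := by
    have : (v - u)/η ≤ 1 := by
      have hh : 2/η * (v-u) = (v-u)/η + (v-u)/η := by ring
      rw [hh] at h2
      linarith
    exact (div_le_one hη).mp this
  linarith
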